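/- Let C₀ be a linear binary code of length n whose even-weight part together with its complement forms an equitable 2-partition of the halved n-cube with quotient matrix [[a,b],[c,d]] (i.e. (C₀, V∖C₀) is equitable where C₀ ⊆ even-weight words is a linear code). For any integer t with 1 ≤ t < 2^{n−1}/|C₀|, the union of any t distinct cosets of C₀ inside the even-weight words, together with its complement, is an equitable 2-partition of the halved n-cube with quotient matrix [[a+(t−1)c, b−(t−1)c],[tc, d−(t−1)c]]. -/

import Mathlib

open Finset

/-- The hypercube graph on binary words indexed by `ι`. -/
def cube (ι : Type*) [Fintype ι] [DecidableEq ι] : SimpleGraph (ι → ZMod 2) where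
  Adj x y := hammingDist x y = 1
  symm := ⟨fun x y h => by simpa only [hammingDist_comm] using h⟩
  loopless := ⟨fun x h => by simp [hammingDist_self] at h⟩

instance (ι : Type*) [Fintype ι] [DecidableEq ι] : DecidableRel (cube ι).Adj :=
  fun x y => inferInstanceAs (Decidable (hammingDist x y = 1))

/-- The halved hypercube: even-weight words, adjacent iff Hamming distance 2. -/
def halvedCube (ι : Type*) [Fintype ι] [DecidableEq ι] :
    SimpleGraph {x : ι → ZMod 2 // Even (hammingDist x 0)} where
  Adj x y := hammingDist x.1 y.1 = 2
  symm := ⟨fun x y h => by simpa only [hammingDist_comm] using h⟩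
  loopless := ⟨fun x h => by simp [hammingDist_self] at h⟩

instance (ι : Type*) [Fintype ι] [DecidableEq ι] : DecidableRel (halvedCube ι).Adj :=
  fun x y => inferInstanceAs (Decidable (hammingDist x.1 y.1 = 2))

variable {V : Type*} [Fintype V] [DecidableEq V]

/-- Number of neighbors of `v` in the set `C`. -/
def nbrCount (G : SimpleGraph V) [DecidableRel G.Adj] (v : V) (C : Finset V) : ℕ :=
  (C.filter (G.Adj v)).card

/-- `(C0, C1)` is an equitable 2-partition with quotient matrix `[[a,b],[c,d]]`. -/
def IsEquitable2 (G : SimpleGraph V) [DecidableRel G.Adj] (C0 C1 : Finset V)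
    (a b c d : ℕ) : Prop :=
  Disjoint C0 C1 ∧ C0 ∪ C1 = Finset.univ ∧
  (∀ v ∈ C0, nbrCount G v C0 = a ∧ nbrCount G v C1 = b) ∧
  (∀ v ∈ C1, nbrCount G v C0 = c ∧ nbrCount G v C1 = d)

/-- `C` is an equitable `k`-partition with quotient matrix `S`. -/
def IsEquitableK (G : SimpleGraph V) [DecidableRel G.Adj] {k : ℕ}
    (C : V → Fin k) (S : Fin k → Fin k → ℕ) : Prop :=
  ∀ (v : V) (j : Fin k),
    (Finset.univ.filter (fun w => G.Adj v w ∧ C w = j)).card = S (C v) j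

open scoped symmDiff

lemma zmod2_ne_iff (a b : ZMod 2) : a + b ≠ 0 ↔ ((a ≠ 0) ↔ ¬(b ≠ 0)) := by revert a b; decide

lemma hd_add_parity {n : ℕ} (x y : Fin n → ZMod 2) :
    ∃ k, hammingDist (x + y) 0 + 2 * k = hammingDist x 0 + hammingDist y 0 := by
  classical
  set A := univ.filter (fun i => x i ≠ 0) with hA
  set B := univ.filter (fun i => y i ≠ 0) with hB
  refine ⟨(A ∩ B).card, ?_⟩
  have h1 : hammingDist (x + y) 0 = (A ∆ B).card := by
    unfold hammingDist
    congr 1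
    ext i
    simp only [Finset.mem_symmDiff, hA, hB, mem_filter, mem_univ, true_and, Pi.add_apply,
      Pi.zero_apply]
    have := zmod2_ne_iff (x i) (y i)
    tauto
  have h2 : hammingDist x 0 = A.card := rfl
  have h3 : hammingDist y 0 = B.card := rfl
  have h4 : (A ∆ B).card + (A ∩ B).card = (A ∪ B).card := by
    have := Finset.card_union_of_disjoint (disjoint_symmDiff_inf A B)
    have h6 : A ∆ B ∪ A ∩ B = A ∪ B := by simpa using symmDiff_sup_inf A B
    simpa [h6] using this.symm
  have h5 := Finset.card_union_add_card_inter A B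
  omega

lemma even_hd_add {n : ℕ} {x y : Fin n → ZMod 2} (hx : Even (hammingDist x 0))
    (hy : Even (hammingDist y 0)) : Even (hammingDist (x + y) 0) := by
  obtain ⟨k, hk⟩ := hd_add_parity x y
  rw [Nat.even_iff] at *
  omega

lemma hd_add_right {n : ℕ} (x y u : Fin n → ZMod 2) :
    hammingDist (x + u) (y + u) = hammingDist x y := by
  unfold hammingDist
  congr 1
  ext i
  simp [add_left_inj]

lemma add_self_zmod2 {n : ℕ} (x : Fin n → ZMod 2) : x + x = 0 :=
  funext fun i => CharTwo.add_self_eq_zero (x i)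


/-- shift by an even word, as a map on the halved cube vertex set -/
def shiftV {n : ℕ} (u : Fin n → ZMod 2) (hu : Even (hammingDist u 0))
    (w : {x : Fin n → ZMod 2 // Even (hammingDist x 0)}) :
    {x : Fin n → ZMod 2 // Even (hammingDist x 0)} :=
  ⟨w.1 + u, even_hd_add w.2 hu⟩

lemma nbrCount_shift {n : ℕ} (u : Fin n → ZMod 2) (hu : Even (hammingDist u 0))
    (v : {x : Fin n → ZMod 2 // Even (hammingDist x 0)})
    (P : (Fin n → ZMod 2) → Prop) [DecidablePred P] :
    nbrCount (halvedCube (Fin n)) v (univ.filter fun w => P (w.1 + u)) =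
    nbrCount (halvedCube (Fin n)) (shiftV u hu v) (univ.filter fun w => P w.1) := by
  classical
  unfold nbrCount
  rw [filter_filter, filter_filter]
  apply Finset.card_nbij' (shiftV u hu) (shiftV u hu)
  · intro w hw
    simp only [mem_coe, mem_filter, mem_univ, true_and] at hw ⊢
    refine ⟨hw.1, ?_⟩
    show hammingDist (v.1 + u) (w.1 + u) = 2
    rw [hd_add_right]
    exact hw.2
  · intro w hw
    simp only [mem_coe, mem_filter, mem_univ, true_and] at hw ⊢
    constructor
    · show P (w.1 + u + u)
      rw [add_assoc, add_self_zmod2, add_zero]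
      exact hw.1
    · show hammingDist v.1 (w.1 + u) = 2
      have h9 : hammingDist (v.1 + u) (w.1 + u + u) = 2 := by
        rw [add_assoc, add_self_zmod2, add_zero]
        exact hw.2
      rwa [hd_add_right] at h9
  · intro w _
    simp only [shiftV, Subtype.ext_iff, add_assoc, add_self_zmod2, add_zero]
  · intro w _
    simp only [shiftV, Subtype.ext_iff, add_assoc, add_self_zmod2, add_zero]

lemma nbrCount_filter_add_filter_neg {n : ℕ} (v : {x : Fin n → ZMod 2 // Even (hammingDist x 0)})
    (p : {x : Fin n → ZMod 2 // Even (hammingDist x 0)} → Prop) [DecidablePred p] :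
    nbrCount (halvedCube (Fin n)) v (univ.filter p) +
    nbrCount (halvedCube (Fin n)) v (univ.filter fun w => ¬ p w) =
    nbrCount (halvedCube (Fin n)) v univ := by
  classical
  unfold nbrCount
  rw [Finset.filter_comm, Finset.filter_comm (fun w => ¬ p w)]
  exact Finset.card_filter_add_card_filter_not (p := p)

lemma deg_const {n : ℕ} (v : {x : Fin n → ZMod 2 // Even (hammingDist x 0)}) :
    nbrCount (halvedCube (Fin n)) v univ
      = nbrCount (halvedCube (Fin n)) ⟨0, by simp [hammingDist_self]⟩ univ := by
  classical
  have h := nbrCount_shift v.1 v.2 v (fun _ => True)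
  simp only [Finset.filter_true] at h
  rw [h]
  congr 1
  exact Subtype.ext (add_self_zmod2 v.1)

lemma card_even_words {n : ℕ} (hn : 1 ≤ n) :
    2 ^ (n - 1) ≤ (univ.filter fun x : Fin n → ZMod 2 => Even (hammingDist x 0)).card := by
  classical
  set E := univ.filter fun x : Fin n → ZMod 2 => Even (hammingDist x 0) with hE
  set O := univ.filter fun x : Fin n → ZMod 2 => ¬ Even (hammingDist x 0) with hO
  have hsum : E.card + O.card = 2 ^ n := by
    rw [hE, hO, Finset.card_filter_add_card_filter_not]
    simp [Finset.card_univ]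
  have j0 : Fin n := ⟨0, hn⟩
  set e : Fin n → ZMod 2 := Pi.single j0 1 with he
  have hde : hammingDist e 0 = 1 := by
    show (univ.filter fun i => e i ≠ 0).card = 1
    have h1 : (univ.filter fun i => e i ≠ 0) = {j0} := by
      ext i
      simp only [mem_filter, mem_univ, true_and, mem_singleton, he, Pi.single_apply]
      by_cases h : i = j0 <;> simp [h]
    rw [h1, card_singleton]
  have hpar : ∀ x : Fin n → ZMod 2, Even (hammingDist (x + e) 0) ↔ ¬ Even (hammingDist x 0) := by
    intro x
    obtain ⟨k, hk⟩ := hd_add_parity x e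
    rw [hde] at hk
    rw [Nat.even_iff, Nat.even_iff]
    omega
  have hEO : E.card = O.card := by
    apply Finset.card_nbij' (· + e) (· + e)
    · intro x hx
      simp only [hE, hO, mem_coe, mem_filter, mem_univ, true_and] at hx ⊢
      exact fun h => ((hpar x).mp h) hx
    · intro x hx
      simp only [hE, hO, mem_coe, mem_filter, mem_univ, true_and] at hx ⊢
      exact (hpar x).mpr hx
    · intro x _
      dsimp only
      rw [add_assoc, add_self_zmod2, add_zero]
    · intro x _
      dsimp only
      rw [add_assoc, add_self_zmod2, add_zero]
  have hp : 2 ^ (n - 1) * 2 = 2 ^ n := by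
    rw [← pow_succ]
    congr 1
    omega
  omega

/-- if a linear code `C₀` of even-weight words gives an equitable
2-partition `(C₀, complement)` of the halved `n`-cube with quotient matrix
`[[a,b],[c,d]]`, then the union of any `t` distinct cosets of `C₀` inside the
even-weight words (for `1 ≤ t < 2^{n-1}/|C₀|`) gives an equitable 2-partition
with quotient matrix `[[a+(t-1)c, b-(t-1)c],[tc, d-(t-1)c]]`. -/
theorem stmt10 (n : ℕ) (C0 : Finset (Fin n → ZMod 2))
    (heven : ∀ x ∈ C0, Even (hammingDist x 0))
    (hzero : (0 : Fin n → ZMod 2) ∈ C0)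
    (hlin : ∀ x ∈ C0, ∀ y ∈ C0, x + y ∈ C0)
    (a b c d : ℕ)
    (hEq : IsEquitable2 (halvedCube (Fin n))
      (Finset.univ.filter (fun v => v.1 ∈ C0))
      (Finset.univ.filter (fun v => v.1 ∉ C0)) a b c d)
    (t : ℕ) (ht1 : 1 ≤ t) (ht2 : t * C0.card < 2 ^ (n - 1))
    (T : Finset (Fin n → ZMod 2)) (hTcard : T.card = t)
    (hTeven : ∀ x ∈ T, Even (hammingDist x 0))
    (hTdistinct : ∀ x ∈ T, ∀ y ∈ T, x ≠ y → x + y ∉ C0) :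
    IsEquitable2 (halvedCube (Fin n))
      (Finset.univ.filter (fun v => ∃ x ∈ T, ∃ y ∈ C0, v.1 = x + y))
      (Finset.univ.filter (fun v => ¬∃ x ∈ T, ∃ y ∈ C0, v.1 = x + y))
      (a + (t - 1) * c) (b - (t - 1) * c) (t * c) (d - (t - 1) * c) := by
  classical
  obtain ⟨hdisj0, hunion0, hA0, hB0⟩ := hEq
  have hc0pos : 0 < C0.card := Finset.card_pos.mpr ⟨0, hzero⟩
  have hn1 : 1 ≤ n := by
    by_contra h
    have hn0 : n = 0 := by omega
    subst hn0
    have h1 : (1:ℕ) ≤ t * C0.card := Nat.mul_pos ht1 hc0pos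
    have h2 : (2:ℕ) ^ (0 - 1) = 1 := by norm_num
    omega
  -- the membership predicate rephrased
  have hadd3 : ∀ x y : Fin n → ZMod 2, (x + y) + x = y := by
    intro x y
    rw [add_comm x y, add_assoc, add_self_zmod2, add_zero]
  have hmemD : ∀ v : {x : Fin n → ZMod 2 // Even (hammingDist x 0)},
      (∃ x ∈ T, ∃ y ∈ C0, v.1 = x + y) ↔ (∃ x ∈ T, v.1 + x ∈ C0) := by
    intro v
    constructor
    · rintro ⟨x, hx, y, hy, hv⟩
      refine ⟨x, hx, ?_⟩
      rw [hv, hadd3]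
      exact hy
    · rintro ⟨x, hx, hxv⟩
      refine ⟨x, hx, v.1 + x, hxv, ?_⟩
      rw [add_comm x (v.1 + x), add_assoc, add_self_zmod2, add_zero]
  -- cosets
  set Cst : (Fin n → ZMod 2) → Finset {x : Fin n → ZMod 2 // Even (hammingDist x 0)} :=
    fun x => univ.filter (fun v => v.1 + x ∈ C0) with hCst
  have hcount : ∀ x ∈ T, ∀ v : {x : Fin n → ZMod 2 // Even (hammingDist x 0)},
      nbrCount (halvedCube (Fin n)) v (Cst x) = if v.1 + x ∈ C0 then a else c := by
    intro x hx v
    have hxe := hTeven x hx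
    have h := nbrCount_shift x hxe v (· ∈ C0)
    rw [hCst]
    rw [h]
    by_cases hm : v.1 + x ∈ C0
    · rw [if_pos hm]
      exact (hA0 (shiftV x hxe v) (by simp only [mem_filter, mem_univ, true_and]; exact hm)).1
    · rw [if_neg hm]
      exact (hB0 (shiftV x hxe v) (by simp only [mem_filter, mem_univ, true_and]; exact hm)).1
  have huniq : ∀ v : {x : Fin n → ZMod 2 // Even (hammingDist x 0)}, ∀ x ∈ T, ∀ y ∈ T,
      v.1 + x ∈ C0 → v.1 + y ∈ C0 → x = y := by
    intro v x hx y hy h1 h2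
    by_contra hne
    have h3 := hlin _ h1 _ h2
    rw [add_add_add_comm, add_self_zmod2, zero_add] at h3
    exact hTdistinct x hx y hy hne h3
  have hdisjC : ∀ x ∈ T, ∀ y ∈ T, x ≠ y → Disjoint (Cst x) (Cst y) := by
    intro x hx y hy hxy
    rw [Finset.disjoint_left]
    intro v hvx hvy
    simp only [hCst, mem_filter, mem_univ, true_and] at hvx hvy
    exact hxy (huniq v x hx y hy hvx hvy)
  have hDset : (univ.filter (fun v : {x : Fin n → ZMod 2 // Even (hammingDist x 0)} =>
      ∃ x ∈ T, ∃ y ∈ C0, v.1 = x + y)) = T.biUnion Cst := by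
    ext v
    simp only [mem_filter, mem_univ, true_and, mem_biUnion, hCst]
    exact hmemD v
  have hsumD : ∀ v : {x : Fin n → ZMod 2 // Even (hammingDist x 0)},
      nbrCount (halvedCube (Fin n)) v (T.biUnion Cst)
        = ∑ x ∈ T, nbrCount (halvedCube (Fin n)) v (Cst x) := by
    intro v
    unfold nbrCount
    rw [Finset.filter_biUnion]
    exact Finset.card_biUnion
      (fun x hx y hy hxy => Finset.disjoint_filter_filter (hdisjC x hx y hy hxy))
  -- abbreviate the products so omega can treat them as atoms
  set m1 := (t - 1) * c with hm1
  have htc : t * c = c + m1 := by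
    rw [hm1]
    cases t with
    | zero => omega
    | succ k => rw [Nat.succ_sub_one, Nat.succ_mul, add_comm]
  -- counts in D for the two cases
  have hDin : ∀ v : {x : Fin n → ZMod 2 // Even (hammingDist x 0)}, (∃ x ∈ T, v.1 + x ∈ C0) →
      nbrCount (halvedCube (Fin n)) v (T.biUnion Cst) = a + m1 := by
    rintro v ⟨x0, hx0, hvx0⟩
    have h2 : ∀ x ∈ T.erase x0, nbrCount (halvedCube (Fin n)) v (Cst x) = c := by
      intro x hx
      obtain ⟨hne, hxT⟩ := Finset.mem_erase.mp hx
      rw [hcount x hxT v, if_neg]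
      intro hmem
      exact hne (huniq v x hxT x0 hx0 hmem hvx0)
    rw [hsumD v, ← Finset.add_sum_erase T _ hx0, hcount x0 hx0 v, if_pos hvx0,
      Finset.sum_congr rfl h2, Finset.sum_const, smul_eq_mul,
      Finset.card_erase_of_mem hx0, hTcard, hm1]
  have hDout : ∀ v : {x : Fin n → ZMod 2 // Even (hammingDist x 0)}, ¬(∃ x ∈ T, v.1 + x ∈ C0) →
      nbrCount (halvedCube (Fin n)) v (T.biUnion Cst) = t * c := by
    intro v hv
    push_neg at hv
    have h2 : ∀ x ∈ T, nbrCount (halvedCube (Fin n)) v (Cst x) = c := by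
      intro x hx
      rw [hcount x hx v, if_neg (hv x hx)]
    rw [hsumD v, Finset.sum_congr rfl h2, Finset.sum_const, smul_eq_mul, hTcard]
  -- degrees
  have hdegv : ∀ v : {x : Fin n → ZMod 2 // Even (hammingDist x 0)},
      nbrCount (halvedCube (Fin n)) v univ
        = nbrCount (halvedCube (Fin n)) ⟨0, by simp [hammingDist_self]⟩ univ := deg_const
  set deg0 := nbrCount (halvedCube (Fin n)) (⟨0, by simp [hammingDist_self]⟩ :
    {x : Fin n → ZMod 2 // Even (hammingDist x 0)}) univ with hdeg0
  have hab : a + b = deg0 := by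
    have h1 := hA0 ⟨0, by simp [hammingDist_self]⟩
      (by simp only [mem_filter, mem_univ, true_and]; exact hzero)
    have h2 := nbrCount_filter_add_filter_neg
      (⟨0, by simp [hammingDist_self]⟩ : {x : Fin n → ZMod 2 // Even (hammingDist x 0)})
      (fun v => v.1 ∈ C0)
    rw [h1.1, h1.2] at h2
    exact h2
  have hC1ne : ∃ v : {x : Fin n → ZMod 2 // Even (hammingDist x 0)}, v.1 ∉ C0 := by
    by_contra h
    push_neg at h
    have hinj : (univ : Finset {x : Fin n → ZMod 2 // Even (hammingDist x 0)}).card ≤ C0.card :=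
      Finset.card_le_card_of_injOn (fun v => v.1) (fun v _ => h v)
        (fun v _ w _ hvw => Subtype.ext hvw)
    rw [Finset.card_univ, Fintype.card_subtype] at hinj
    have h1 : C0.card ≤ t * C0.card := Nat.le_mul_of_pos_left _ ht1
    have h2 := card_even_words (n := n) hn1
    omega
  have hcd : c + d = deg0 := by
    obtain ⟨v1, hv1⟩ := hC1ne
    have h1 := hB0 v1 (by simp only [mem_filter, mem_univ, true_and]; exact hv1)
    have h2 := nbrCount_filter_add_filter_neg v1 (fun v => v.1 ∈ C0)
    rw [h1.1, h1.2, hdegv v1] at h2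
    exact h2
  -- assemble
  refine ⟨?_, ?_, ?_, ?_⟩
  · rw [Finset.disjoint_left]
    intro v hv1 hv2
    simp only [mem_filter, mem_univ, true_and] at hv1 hv2
    exact hv2 hv1
  · ext v
    simp only [mem_union, mem_filter, mem_univ, true_and]
    tauto
  · intro v hv
    have hvD : ∃ x ∈ T, v.1 + x ∈ C0 := (hmemD v).mp (Finset.mem_filter.mp hv).2
    have hDv : nbrCount (halvedCube (Fin n)) v
        (univ.filter (fun v : {x : Fin n → ZMod 2 // Even (hammingDist x 0)} =>
          ∃ x ∈ T, ∃ y ∈ C0, v.1 = x + y)) = a + m1 := by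
      rw [hDset]
      exact hDin v hvD
    refine ⟨hDv, ?_⟩
    have hsplit := nbrCount_filter_add_filter_neg v
      (fun v : {x : Fin n → ZMod 2 // Even (hammingDist x 0)} => ∃ x ∈ T, ∃ y ∈ C0, v.1 = x + y)
    rw [hDv, hdegv v] at hsplit
    omega
  · intro v hv
    have hvD : ¬∃ x ∈ T, v.1 + x ∈ C0 := fun h =>
      (Finset.mem_filter.mp hv).2 ((hmemD v).mpr h)
    have hDv : nbrCount (halvedCube (Fin n)) v
        (univ.filter (fun v : {x : Fin n → ZMod 2 // Even (hammingDist x 0)} =>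
          ∃ x ∈ T, ∃ y ∈ C0, v.1 = x + y)) = t * c := by
      rw [hDset]
      exact hDout v hvD
    refine ⟨hDv, ?_⟩
    have hsplit := nbrCount_filter_add_filter_neg v
      (fun v : {x : Fin n → ZMod 2 // Even (hammingDist x 0)} => ∃ x ∈ T, ∃ y ∈ C0, v.1 = x + y)
    rw [hDv, hdegv v] at hsplit
    omega
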